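/- The sequence μ(d) := d!·∑_{j=1}^{d} 1/((d+1)^j·(d-j)!) is strictly increasing in d for d ≥ 1, and μ(d) > 1 for all d ≥ 3. -/

import Mathlib

/-- The mean number of new spreaders one spreader with `d` ignorant neighbors generates:
`μ(d) = d! · ∑_{j=1}^{d} 1/((d+1)^j · (d-j)!)`. -/
noncomputable def mtMu (d : ℕ) : ℝ :=
  (Nat.factorial d : ℝ) *
    ∑ j ∈ Finset.Icc 1 d, 1 / (((d : ℝ) + 1) ^ j * (Nat.factorial (d - j) : ℝ))

noncomputable def mtF (d j : ℕ) : ℝ :=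
  (Nat.factorial d : ℝ) / (((d : ℝ) + 1) ^ j * (Nat.factorial (d - j) : ℝ))

lemma mtMu_eq (d : ℕ) : mtMu d = ∑ j ∈ Finset.Icc 1 d, mtF d j := by
  rw [mtMu, Finset.mul_sum]
  refine Finset.sum_congr rfl fun j _ => ?_
  rw [mtF, mul_one_div]

lemma mtF_pos (d j : ℕ) : 0 < mtF d j := by
  rw [mtF]
  apply div_pos
  · exact_mod_cast Nat.factorial_pos d
  · apply mul_pos
    · positivity
    · exact_mod_cast Nat.factorial_pos (d - j)

lemma nat_key (d j : ℕ) (h1 : 1 ≤ j) (h2 : j ≤ d) :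
    (d + 2) ^ j * (d + 1 - j) < (d + 1) ^ (j + 1) := by
  induction j with
  | zero => omega
  | succ k ih =>
    rcases Nat.eq_zero_or_pos k with hk | hk
    · subst hk
      have h : d + 1 - (0 + 1) = d := by omega
      rw [h]
      have : (d + 1) ^ (0 + 1 + 1) = (d + 1) * (d + 1) := by ring
      have hp : (d + 2) ^ (0 + 1) = d + 2 := by ring
      rw [this, hp]
      nlinarith
    · have hk2 : k ≤ d := by omega
      have ihk := ih hk hk2
      have hstep : (d + 2) * (d + 1 - (k + 1)) ≤ (d + 1) * (d + 1 - k) := by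
        have : d + 1 - (k + 1) + 1 = d + 1 - k := by omega
        nlinarith [Nat.sub_le (d + 1) k, this]
      calc (d + 2) ^ (k + 1) * (d + 1 - (k + 1))
          = (d + 2) ^ k * ((d + 2) * (d + 1 - (k + 1))) := by ring
        _ ≤ (d + 2) ^ k * ((d + 1) * (d + 1 - k)) := by
            exact Nat.mul_le_mul_left _ hstep
        _ = (d + 1) * ((d + 2) ^ k * (d + 1 - k)) := by ring
        _ < (d + 1) * (d + 1) ^ (k + 1) := by
            gcongr
        _ = (d + 1) ^ (k + 1 + 1) := by ring

lemma nat_main (d j : ℕ) (h1 : 1 ≤ j) (h2 : j ≤ d) :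
    Nat.factorial d * ((d + 2) ^ j * Nat.factorial (d + 1 - j)) <
      Nat.factorial (d + 1) * ((d + 1) ^ j * Nat.factorial (d - j)) := by
  have hs : d + 1 - j = (d - j) + 1 := by omega
  rw [hs, Nat.factorial_succ, Nat.factorial_succ]
  have k := nat_key d j h1 h2
  rw [hs] at k
  calc Nat.factorial d * ((d + 2) ^ j * ((d - j + 1) * Nat.factorial (d - j)))
      = ((d + 2) ^ j * (d - j + 1)) * (Nat.factorial d * Nat.factorial (d - j)) := by ring
    _ < (d + 1) ^ (j + 1) * (Nat.factorial d * Nat.factorial (d - j)) := by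
        have hp : 0 < Nat.factorial d * Nat.factorial (d - j) :=
          Nat.mul_pos (Nat.factorial_pos _) (Nat.factorial_pos _)
        exact Nat.mul_lt_mul_of_lt_of_le k (le_refl _) hp
    _ = (d + 1) * Nat.factorial d * ((d + 1) ^ j * Nat.factorial (d - j)) := by ring

lemma mtF_lt (d j : ℕ) (h1 : 1 ≤ j) (h2 : j ≤ d) : mtF d j < mtF (d + 1) j := by
  rw [mtF, mtF]
  rw [div_lt_div_iff₀]
  · have h := nat_main d j h1 h2
    have h' : (↑(Nat.factorial d * ((d + 2) ^ j * Nat.factorial (d + 1 - j))) : ℝ) <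
        (↑(Nat.factorial (d + 1) * ((d + 1) ^ j * Nat.factorial (d - j))) : ℝ) := by
      exact_mod_cast h
    push_cast at h'
    convert h' using 2 <;> push_cast
    · rfl
    · ring
  · apply mul_pos
    · positivity
    · exact_mod_cast Nat.factorial_pos (d - j)
  · apply mul_pos
    · positivity
    · exact_mod_cast Nat.factorial_pos (d + 1 - j)

lemma mtMu_mono (d : ℕ) (hd : 1 ≤ d) : mtMu d < mtMu (d + 1) := by
  rw [mtMu_eq, mtMu_eq]
  have h1 : ∑ j ∈ Finset.Icc 1 d, mtF d j < ∑ j ∈ Finset.Icc 1 d, mtF (d + 1) j := by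
    apply Finset.sum_lt_sum_of_nonempty
    · exact ⟨1, Finset.mem_Icc.mpr ⟨le_refl 1, hd⟩⟩
    · intro j hj
      rw [Finset.mem_Icc] at hj
      exact mtF_lt d j hj.1 hj.2
  have h2 : ∑ j ∈ Finset.Icc 1 d, mtF (d + 1) j ≤ ∑ j ∈ Finset.Icc 1 (d + 1), mtF (d + 1) j := by
    apply Finset.sum_le_sum_of_subset_of_nonneg
    · exact Finset.Icc_subset_Icc_right (by omega)
    · intro j _ _
      exact (mtF_pos (d + 1) j).le
  exact lt_of_lt_of_le h1 h2

lemma mtMu_three : mtMu 3 = 39 / 32 := by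
  have h : Finset.Icc 1 3 = {1, 2, 3} := rfl
  rw [mtMu, h]
  simp [Finset.sum_insert, Nat.factorial]
  norm_num

theorem stmt5 :
    (∀ d : ℕ, 1 ≤ d → mtMu d < mtMu (d + 1)) ∧ (∀ d : ℕ, 3 ≤ d → 1 < mtMu d) := by
  refine ⟨mtMu_mono, ?_⟩
  intro d hd
  induction d, hd using Nat.le_induction with
  | base => rw [mtMu_three]; norm_num
  | succ n hn ih => exact lt_trans ih (mtMu_mono n (by omega))
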